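/- Let d ≥ 1, let μ, τ, ζ, ε > 0, let γ ∈ (0,2), and let L : ℝ^d → ℝ be twice continuously differentiable. Let w* ∈ ℝ^d satisfy ∇L(w*) = 0, and write H = ∇²L(w*). Assume: (i) for all w ∈ ℝ^d, min{ (μ/2)‖w−w*‖₂², (τ/2)‖w−w*‖₂^γ } ≤ L(w) − L(w*); (ii) xᵀHx ≤ ζ‖x‖₂² for all x ∈ ℝ^d; (iii) μ‖x‖₂² ≤ xᵀHx for all x ∈ ℝ^d; (iv) for every w with √((w−w*)ᵀH(w−w*)) ≤ 1, one has (1 − √((w−w*)ᵀH(w−w*)))² · xᵀHx ≤ xᵀ∇²L(w)x for all x ∈ ℝ^d. Let ŵ ∈ ℝ^d satisfy L(ŵ) − L(w*) ≤ ε with ε ≤ min{ τ / (2^{γ+1} ζ^{γ/2}), μ / (8ζ) }. Then ‖ŵ − w*‖₂² ≤ 8ε/μ. -/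

import Mathlib

open Matrix

set_option maxHeartbeats 1000000 in
/-- Deterministic core of Theorem 5.2 (regression oracle guarantee): under the
growth condition, Hessian bounds `μ‖x‖² ≤ xᵀHx ≤ ζ‖x‖²` at the stationary point
`w*`, the lower-bound half of self-concordance, and a small enough excess risk
`ε` for `ŵ`, one has `‖ŵ − w*‖₂² ≤ 8ε/μ`. -/
theorem regression_oracle_guarantee
    (d : ℕ) (hd : 1 ≤ d) (μ τ ζ ε : ℝ) (hμ : 0 < μ) (hτ : 0 < τ) (hζ : 0 < ζ)
    (hε : 0 < ε) (γ : ℝ) (hγ0 : 0 < γ) (hγ2 : γ < 2)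
    (L : (Fin d → ℝ) → ℝ) (hL : ContDiff ℝ 2 L)
    (wstar : Fin d → ℝ) (hgrad : fderiv ℝ L wstar = 0)
    (hi : ∀ w : Fin d → ℝ,
      min (μ / 2 * ((w - wstar) ⬝ᵥ (w - wstar)))
        (τ / 2 * Real.sqrt ((w - wstar) ⬝ᵥ (w - wstar)) ^ γ) ≤ L w - L wstar)
    (hii : ∀ x : Fin d → ℝ, fderiv ℝ (fderiv ℝ L) wstar x x ≤ ζ * (x ⬝ᵥ x))
    (hiii : ∀ x : Fin d → ℝ, μ * (x ⬝ᵥ x) ≤ fderiv ℝ (fderiv ℝ L) wstar x x)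
    (hiv : ∀ w : Fin d → ℝ,
      Real.sqrt (fderiv ℝ (fderiv ℝ L) wstar (w - wstar) (w - wstar)) ≤ 1 →
      ∀ x : Fin d → ℝ,
        (1 - Real.sqrt (fderiv ℝ (fderiv ℝ L) wstar (w - wstar) (w - wstar))) ^ 2 *
          fderiv ℝ (fderiv ℝ L) wstar x x ≤ fderiv ℝ (fderiv ℝ L) w x x)
    (what : Fin d → ℝ) (hup : L what - L wstar ≤ ε)
    (hεsmall : ε ≤ min (τ / (2 ^ (γ + 1) * ζ ^ (γ / 2))) (μ / (8 * ζ))) :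
    (what - wstar) ⬝ᵥ (what - wstar) ≤ 8 * ε / μ := by
  have hε1 : ε ≤ τ / (2 ^ (γ + 1) * ζ ^ (γ / 2)) := le_trans hεsmall (min_le_left _ _)
  have hε2 : ε ≤ μ / (8 * ζ) := le_trans hεsmall (min_le_right _ _)
  set v : Fin d → ℝ := what - wstar with hv
  set r2 : ℝ := v ⬝ᵥ v with hr2def
  have hr2nonneg : 0 ≤ r2 := by
    rw [hr2def, dotProduct]
    exact Finset.sum_nonneg fun i _ => mul_self_nonneg _
  -- Step 1: r2 ≤ 1/(4 ζ)
  have hmin : min (μ / 2 * r2) (τ / 2 * Real.sqrt r2 ^ γ) ≤ ε := le_trans (hi what) hup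
  have hr2small : r2 ≤ 1 / (4 * ζ) := by
    rcases min_le_iff.mp hmin with h1 | h2
    · have h8 : 8 * ζ * ε ≤ μ := by
        rw [le_div_iff₀ (by positivity)] at hε2; linarith
      have hA : ζ * (μ / 2 * r2) ≤ ζ * ε := mul_le_mul_of_nonneg_left h1 hζ.le
      rw [le_div_iff₀ (by positivity)]
      nlinarith
    · -- rpow case
      have hb : (0:ℝ) < 1 / (2 * Real.sqrt ζ) := by positivity
      have hbγ : (1 / (2 * Real.sqrt ζ)) ^ γ = 1 / (2 ^ γ * ζ ^ (γ / 2)) := by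
        rw [Real.div_rpow (by norm_num) (by positivity), Real.one_rpow,
          Real.mul_rpow (by norm_num) (Real.sqrt_nonneg ζ),
          Real.sqrt_eq_rpow, ← Real.rpow_mul hζ.le,
          show (1/2 : ℝ) * γ = γ / 2 by ring]
      have h2γ : (0:ℝ) < (2:ℝ) ^ γ := Real.rpow_pos_of_pos (by norm_num) γ
      have hζγ : (0:ℝ) < ζ ^ (γ / 2) := Real.rpow_pos_of_pos hζ _
      have hεle : ε ≤ τ / 2 * (1 / (2 * Real.sqrt ζ)) ^ γ := by
        rw [hbγ]
        calc ε ≤ τ / (2 ^ (γ + 1) * ζ ^ (γ / 2)) := hε1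
          _ = τ / 2 * (1 / (2 ^ γ * ζ ^ (γ / 2))) := by
              rw [Real.rpow_add (by norm_num) γ 1, Real.rpow_one]
              field_simp
      have hpow : Real.sqrt r2 ^ γ ≤ (1 / (2 * Real.sqrt ζ)) ^ γ := by
        have hle := le_trans h2 hεle
        have hτ2 : (0:ℝ) < τ / 2 := by linarith
        exact le_of_mul_le_mul_left hle hτ2
      have hsq : Real.sqrt r2 ≤ 1 / (2 * Real.sqrt ζ) :=
        (Real.rpow_le_rpow_iff (Real.sqrt_nonneg _) hb.le hγ0).mp hpow
      have hsq' : Real.sqrt r2 * (2 * Real.sqrt ζ) ≤ 1 := by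
        rw [le_div_iff₀ (by positivity)] at hsq; linarith
      have key := mul_le_mul hsq' hsq' (by positivity) (by norm_num)
      rw [le_div_iff₀ (by positivity)]
      nlinarith [Real.mul_self_sqrt hr2nonneg, Real.mul_self_sqrt hζ.le,
        Real.sqrt_nonneg r2, Real.sqrt_nonneg ζ]
  -- Hessian at wstar applied to v
  set Q : ℝ := fderiv ℝ (fderiv ℝ L) wstar v v with hQdef
  have hQle : Q ≤ ζ * r2 := hii v
  have hQge : μ * r2 ≤ Q := hiii v
  have hQ0 : 0 ≤ Q := le_trans (by positivity) hQge
  have hQquarter : Q ≤ 1 / 4 := by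
    have hA := mul_le_mul_of_nonneg_left hr2small hζ.le
    have hid : ζ * (1 / (4 * ζ)) = 1 / 4 := by field_simp
    linarith
  have hsQ : Real.sqrt Q ≤ 1 / 2 := by
    have h := Real.sqrt_le_sqrt hQquarter
    rwa [show (1/4:ℝ) = (1/2)^2 by norm_num, Real.sqrt_sq (by norm_num)] at h
  have hsQ0 : 0 ≤ Real.sqrt Q := Real.sqrt_nonneg _
  -- Step 2: Hessian lower bound along the segment
  have hseg : ∀ t : ℝ, t ∈ Set.Icc (0:ℝ) 1 →
      μ * r2 / 4 ≤ fderiv ℝ (fderiv ℝ L) (wstar + t • v) v v := by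
    intro t ht
    obtain ⟨ht0, ht1⟩ := ht
    have hw : wstar + t • v - wstar = t • v := by abel
    have hQt : fderiv ℝ (fderiv ℝ L) wstar (t • v) (t • v) = t ^ 2 * Q := by
      have e1 : fderiv ℝ (fderiv ℝ L) wstar (t • v) = t • fderiv ℝ (fderiv ℝ L) wstar v :=
        (fderiv ℝ (fderiv ℝ L) wstar).map_smul t v
      have e2 : fderiv ℝ (fderiv ℝ L) wstar v (t • v) = t • fderiv ℝ (fderiv ℝ L) wstar v v :=
        (fderiv ℝ (fderiv ℝ L) wstar v).map_smul t v
      rw [e1, ContinuousLinearMap.smul_apply, e2, smul_eq_mul, smul_eq_mul, hQdef]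
      ring
    have hst : Real.sqrt (fderiv ℝ (fderiv ℝ L) wstar (t • v) (t • v)) = t * Real.sqrt Q := by
      rw [hQt, show t ^ 2 * Q = (t * Real.sqrt Q) * (t * Real.sqrt Q) from by
        linear_combination t ^ 2 * (Real.mul_self_sqrt hQ0).symm,
        Real.sqrt_mul_self (mul_nonneg ht0 hsQ0)]
    have hhalf : t * Real.sqrt Q ≤ 1 / 2 := by nlinarith
    have hle1 : Real.sqrt (fderiv ℝ (fderiv ℝ L) wstar (t • v) (t • v)) ≤ 1 := by
      rw [hst]; linarith
    have hivt := hiv (wstar + t • v) (by rwa [hw]) v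
    rw [hw, hst] at hivt
    have hμr : 0 ≤ μ * r2 := by positivity
    rw [← hQdef] at hivt
    have hs0 : 0 ≤ t * Real.sqrt Q := mul_nonneg ht0 hsQ0
    nlinarith [hivt, hQge, hQ0,
      mul_nonneg (mul_nonneg (by linarith : (0:ℝ) ≤ 1/2 - t * Real.sqrt Q)
        (by linarith : (0:ℝ) ≤ 3/2 - t * Real.sqrt Q)) hQ0]
  -- Step 3: calculus along the segment
  set g : ℝ → ℝ := fun t => L (wstar + t • v) with hgdef
  set g1 : ℝ → ℝ := fun t => fderiv ℝ L (wstar + t • v) v with hg1def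
  have hdL : Differentiable ℝ L := hL.differentiable (by norm_num)
  have hdL' : Differentiable ℝ (fderiv ℝ L) :=
    (hL.fderiv_right (m := 1) (by norm_num)).differentiable (by norm_num)
  have hlinec : Continuous (fun s : ℝ => wstar + s • v) := by continuity
  have hline : ∀ t : ℝ, HasDerivAt (fun s : ℝ => wstar + s • v) v t := by
    intro t
    simpa using ((hasDerivAt_id t).smul_const v).const_add wstar
  have hg : ∀ t : ℝ, HasDerivAt g (g1 t) t := fun t =>
    (hdL (wstar + t • v)).hasFDerivAt.comp_hasDerivAt t (hline t)
  have hg1 : ∀ t : ℝ, HasDerivAt g1 (fderiv ℝ (fderiv ℝ L) (wstar + t • v) v v) t := by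
    intro t
    have h1 : HasDerivAt (fun s : ℝ => fderiv ℝ L (wstar + s • v))
        (fderiv ℝ (fderiv ℝ L) (wstar + t • v) v) t :=
      (hdL' (wstar + t • v)).hasFDerivAt.comp_hasDerivAt t (hline t)
    have h2 := h1.clm_apply (hasDerivAt_const t v)
    simpa using h2
  have hgc : Continuous g := hL.continuous.comp hlinec
  have hg1c : Continuous g1 := (hdL'.continuous.comp hlinec).clm_apply continuous_const
  set c : ℝ := μ * r2 / 4 with hcdef
  have hg10 : g1 0 = 0 := by simp [hg1def, hgrad]
  -- g1 t ≥ c * t on [0,1]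
  have hφ : ∀ t ∈ Set.Icc (0:ℝ) 1, c * t ≤ g1 t := by
    have hmono : MonotoneOn (fun t => g1 t - c * t) (Set.Icc (0:ℝ) 1) := by
      apply monotoneOn_of_deriv_nonneg (convex_Icc 0 1)
      · exact (hg1c.sub (continuous_const.mul continuous_id)).continuousOn
      · intro x _
        have hcm : HasDerivAt (fun t : ℝ => c * t) c x := by
          simpa using (hasDerivAt_id x).const_mul c
        exact ((hg1 x).sub hcm).differentiableAt.differentiableWithinAt
      · intro x hx
        rw [interior_Icc] at hx
        have hcm : HasDerivAt (fun t : ℝ => c * t) c x := by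
          simpa using (hasDerivAt_id x).const_mul c
        rw [HasDerivAt.deriv (f := fun t => g1 t - c * t) ((hg1 x).sub hcm)]
        have hs := hseg x ⟨hx.1.le, hx.2.le⟩
        rw [hcdef]
        linarith
    intro t ht
    have h := hmono (Set.left_mem_Icc.mpr zero_le_one) ht ht.1
    simp only [hg10, mul_zero, sub_zero, zero_sub] at h
    linarith
  -- g 1 - g 0 ≥ c / 2
  have hψ : g 0 + c / 2 ≤ g 1 := by
    have hqd : ∀ x : ℝ, HasDerivAt (fun t : ℝ => c * t ^ 2 / 2) (c * x) x := by
      intro x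
      have h := ((hasDerivAt_pow 2 x).const_mul c).div_const 2
      have he : c * x = c * (↑2 * x ^ (2 - 1)) / 2 := by norm_num; ring
      rw [he]
      exact h
    have hmono : MonotoneOn (fun t => g t - c * t ^ 2 / 2) (Set.Icc (0:ℝ) 1) := by
      apply monotoneOn_of_deriv_nonneg (convex_Icc 0 1)
      · exact (hgc.sub ((continuous_const.mul (continuous_pow 2)).div_const 2)).continuousOn
      · intro x _
        exact ((hg x).sub (hqd x)).differentiableAt.differentiableWithinAt
      · intro x hx
        rw [interior_Icc] at hx
        rw [HasDerivAt.deriv (f := fun t => g t - c * t ^ 2 / 2) ((hg x).sub (hqd x))]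
        have := hφ x ⟨hx.1.le, hx.2.le⟩
        linarith
    have h := hmono (Set.left_mem_Icc.mpr zero_le_one) (Set.right_mem_Icc.mpr zero_le_one)
      zero_le_one
    simp only at h
    norm_num at h
    linarith
  have hgs : g 1 = L what := by
    rw [hgdef]
    simp only [one_smul, hv]
    congr 1
    abel
  have hg0 : g 0 = L wstar := by
    rw [hgdef]
    simp
  rw [hgs, hg0, hcdef] at hψ
  have hfinal : μ * r2 / 8 ≤ ε := by linarith
  rw [le_div_iff₀ hμ]
  linarith
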